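/- Let C11, C12, C21, C22 be Hermitian n×n complex matrices satisfying the conditions (BC-CC): C12·C11 = C11·C12, C21·C22 = C22·C21, and C11·C22 − C12·C21 = I_n. Then the four matrices C11, C12, C21, C22 pairwise commute; consequently there exists a unitary n×n matrix Θ such that Θ⁻¹·C_jk·Θ is diagonal for all j, k ∈ {1, 2}. -/

import Mathlib

open Matrix Module.End


theorem blocks_commute {n : ℕ}
    (A B C D : Matrix (Fin n) (Fin n) ℂ)
    (h11 : Aᴴ = A) (h12 : Bᴴ = B) (h21 : Cᴴ = C) (h22 : Dᴴ = D)
    (hcc1 : B * A = A * B) (hcc2 : C * D = D * C)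
    (hcc3 : A * D - B * C = 1) :
    A * C = C * A ∧ A * D = D * A ∧ B * C = C * B ∧ B * D = D * B := by
  have hadj : D * A - C * B = 1 := by
    have h := congrArg conjTranspose hcc3
    simpa [conjTranspose_sub, conjTranspose_mul, h11, h12, h21, h22] using h
  set T : Matrix (Fin n ⊕ Fin n) (Fin n ⊕ Fin n) ℂ := fromBlocks A B C D with hT
  set J : Matrix (Fin n ⊕ Fin n) (Fin n ⊕ Fin n) ℂ := fromBlocks 0 1 (-1) 0 with hJ
  have hTH : Tᴴ = fromBlocks A C B D := by
    rw [hT, fromBlocks_conjTranspose, h11, h12, h21, h22]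
  have hJJ : J * J = -1 := by
    have hone : (-1 : Matrix (Fin n ⊕ Fin n) (Fin n ⊕ Fin n) ℂ) = fromBlocks (-1) 0 0 (-1) := by
      rw [← fromBlocks_one, fromBlocks_neg]; simp
    rw [hJ, fromBlocks_multiply, hone, fromBlocks_inj]
    refine ⟨by simp, by simp, by simp, by simp⟩
  have hTJT : T * J * Tᴴ = J := by
    rw [hTH, hT, hJ, fromBlocks_multiply, fromBlocks_multiply]
    simp only [Matrix.mul_zero, Matrix.mul_one, Matrix.mul_neg,
      Matrix.zero_mul, Matrix.one_mul, Matrix.neg_mul, zero_add, add_zero]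
    rw [fromBlocks_inj]
    refine ⟨?_, ?_, ?_, ?_⟩
    · rw [hcc1]; exact neg_add_cancel _
    · rw [← sub_eq_neg_add]; exact hcc3
    · rw [← sub_eq_neg_add, ← neg_sub, hadj]
    · rw [hcc2]; exact neg_add_cancel _
  have h5 : T * (J * Tᴴ * J) = -1 := by
    rw [← mul_assoc, ← mul_assoc, hTJT, hJJ]
  have h5' : T * (-(J * Tᴴ * J)) = 1 := by rw [mul_neg, h5, neg_neg]
  have h6 : (-(J * Tᴴ * J)) * T = 1 := mul_eq_one_comm.mp h5'
  have h7 : (J * Tᴴ * J) * T = -1 := by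
    rw [neg_mul] at h6
    exact neg_eq_iff_eq_neg.mp h6
  have h8 : Tᴴ * J * T = J := by
    have h9 : J * (Tᴴ * J * T) = -1 := by
      rw [mul_assoc J Tᴴ J, mul_assoc J (Tᴴ * J) T] at h7
      exact h7
    have h10 := congrArg (fun X => J * X) h9
    change J * (J * (Tᴴ * J * T)) = J * -1 at h10
    rw [← mul_assoc, hJJ, neg_one_mul, mul_neg_one] at h10
    exact neg_injective h10
  have hcalc : Tᴴ * J * T =
      fromBlocks (-(C * A) + A * C) (-(C * B) + A * D) (-(D * A) + B * C) (-(D * B) + B * D) := by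
    rw [hTH, hT, hJ, fromBlocks_multiply, fromBlocks_multiply]
    simp only [Matrix.mul_zero, Matrix.mul_one, Matrix.mul_neg,
      Matrix.zero_mul, Matrix.one_mul, Matrix.neg_mul, zero_add, add_zero]
  rw [hcalc, hJ] at h8
  obtain ⟨e1, e2, e3, e4⟩ := fromBlocks_inj.mp h8
  refine ⟨?_, ?_, ?_, ?_⟩
  · -- A * C = C * A
    have : A * C = C * A := by
      have := e1
      rw [neg_add_eq_zero] at this
      exact this.symm
    exact this
  · -- A * D = D * A : from e3 : -(D*A) + B*C = -1, so D*A - B*C = 1 = A*D - B*C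
    have hDA : D * A - B * C = 1 := by
      rw [← sub_eq_neg_add, ← neg_sub] at e3
      exact (neg_injective e3)
    have := hcc3.trans hDA.symm
    -- A*D - B*C = D*A - B*C
    exact sub_left_injective this
  · -- B * C = C * B : from e2 : -(C*B) + A*D = 1, so A*D - C*B = 1 = A*D - B*C
    have hCB : A * D - C * B = 1 := by rw [← sub_eq_neg_add] at e2; exact e2
    have := hcc3.trans hCB.symm
    exact sub_right_injective this
  · have := e4
    rw [neg_add_eq_zero] at this
    exact this.symm


theorem aux_subordinate_basis {E : Type*} [NormedAddCommGroup E] [InnerProductSpace ℂ E]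
    [FiniteDimensional ℂ E] {n : ℕ} (hn : Module.finrank ℂ E = n)
    {κ : Type*} {V : κ → Submodule ℂ E} (hfin : {χ : κ | V χ ≠ ⊥}.Finite)
    (hortho : OrthogonalFamily ℂ (fun χ => ↥(V χ)) (fun χ => (V χ).subtypeₗᵢ))
    (hsup : ⨆ χ, V χ = ⊤) :
    ∃ (b : OrthonormalBasis (Fin n) ℂ E) (f : Fin n → κ), ∀ a, b a ∈ V (f a) := by
  classical
  haveI : Fintype {χ : κ | V χ ≠ ⊥} := hfin.fintype
  have hortho' : OrthogonalFamily ℂ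
      (fun χ : {χ : κ | V χ ≠ ⊥} => ↥(V χ.1)) (fun χ => (V χ.1).subtypeₗᵢ) :=
    fun i j hij => hortho (fun h => hij (Subtype.ext h))
  have hsup' : (⨆ χ : {χ : κ | V χ ≠ ⊥}, V χ.1) = ⊤ := by
    apply le_antisymm le_top
    rw [← hsup]
    apply iSup_le
    intro χ
    by_cases h : V χ = ⊥
    · rw [h]; exact bot_le
    · exact le_iSup_of_le ⟨χ, h⟩ le_rfl
  have hIntern' : DirectSum.IsInternal (fun χ : {χ : κ | V χ ≠ ⊥} => V χ.1) := by
    apply hortho'.isInternal_iff.mpr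
    rw [hsup', Submodule.top_orthogonal_eq_bot]
  exact ⟨hIntern'.subordinateOrthonormalBasis hn hortho',
    fun a => (hIntern'.subordinateOrthonormalBasisIndex hn a hortho').1,
    fun a => hIntern'.subordinateOrthonormalBasis_subordinate hn a hortho'⟩

theorem simul_diag_of_commute {n : ℕ} {ι : Type} [Fintype ι] [DecidableEq ι]
    (M : ι → Matrix (Fin n) (Fin n) ℂ) (hherm : ∀ i, (M i).IsHermitian)
    (hcomm : ∀ i j, M i * M j = M j * M i) :
    ∃ Θ : Matrix (Fin n) (Fin n) ℂ, Θ * Θᴴ = 1 ∧ Θᴴ * Θ = 1 ∧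
      ∀ i, (Θᴴ * M i * Θ).IsDiag := by
  classical
  let T : ι → Module.End ℂ (EuclideanSpace ℂ (Fin n)) := fun i => Matrix.toEuclideanLin (M i)
  have hsymm : ∀ i, (T i).IsSymmetric := fun i =>
    Matrix.isHermitian_iff_isSymmetric.mp (hherm i)
  have hmul : ∀ i j, T i * T j = Matrix.toEuclideanLin (M i * M j) := by
    intro i j
    apply LinearMap.ext
    intro v
    show Matrix.toEuclideanLin (M i) (Matrix.toEuclideanLin (M j) v) = _
    simp [Matrix.toEuclideanLin_apply, Matrix.mulVec_mulVec]
  have hTcomm : Pairwise (Function.onFun Commute T) := by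
    intro i j _
    unfold Function.onFun Commute SemiconjBy
    rw [hmul, hmul, hcomm]
  have hIntern :=
    LinearMap.IsSymmetric.LinearMap.IsSymmetric.directSum_isInternal_of_pairwise_commute
      hsymm hTcomm
  have hortho := LinearMap.IsSymmetric.orthogonalFamily_iInf_eigenspaces hsymm
  have hfin : {χ : ι → ℂ | (⨅ i, eigenspace (T i) (χ i)) ≠ ⊥}.Finite := by
    have hsub : {χ : ι → ℂ | (⨅ i, eigenspace (T i) (χ i)) ≠ ⊥} ⊆
        Set.pi Set.univ (fun i => {μ | (T i).HasEigenvalue μ}) := by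
      intro χ hχ i _
      have h1 : (⨅ i, eigenspace (T i) (χ i)) ≤ eigenspace (T i) (χ i) := iInf_le _ i
      intro h
      exact hχ (le_bot_iff.mp (h ▸ h1))
    exact Set.Finite.subset (Set.Finite.pi fun i => (T i).finite_hasEigenvalue) hsub
  obtain ⟨b, f, hmem⟩ := aux_subordinate_basis finrank_euclideanSpace_fin hfin hortho
    hIntern.submodule_iSup_eq_top
  have heig : ∀ a i, T i (b a) = (f a i) • b a := by
    intro a i
    exact mem_eigenspace_iff.mp ((Submodule.mem_iInf _).mp (hmem a) i)
  have hmulvec : ∀ a i, M i *ᵥ ⇑(b a) = (f a i) • ⇑(b a) := by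
    intro a i
    exact congrArg (WithLp.equiv 2 (Fin n → ℂ)) (heig a i)
  let Θ : Matrix (Fin n) (Fin n) ℂ :=
    (EuclideanSpace.basisFun (Fin n) ℂ).toBasis.toMatrix b.toBasis
  have hunit : Θ ∈ Matrix.unitaryGroup (Fin n) ℂ :=
    (EuclideanSpace.basisFun (Fin n) ℂ).toMatrix_orthonormalBasis_mem_unitary b
  have h1 : Θ * Θᴴ = 1 := Matrix.mem_unitaryGroup_iff.mp hunit
  have h2 : Θᴴ * Θ = 1 := Matrix.mem_unitaryGroup_iff'.mp hunit
  refine ⟨Θ, h1, h2, ?_⟩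
  intro i
  have hmv : ∀ j, Θ *ᵥ Pi.single j 1 = ⇑(b j) := by
    intro j
    funext p
    simp [Matrix.mulVec_single]
    rfl
  have hmv' : ∀ j, Θᴴ *ᵥ ⇑(b j) = Pi.single j 1 := by
    intro j
    rw [← hmv, Matrix.mulVec_mulVec, h2, Matrix.one_mulVec]
  have key : Θᴴ * M i * Θ = Matrix.diagonal (fun a => f a i) := by
    apply Matrix.toEuclideanLin.injective
    apply Module.Basis.ext (EuclideanSpace.basisFun (Fin n) ℂ).toBasis
    intro j
    simp only [Matrix.toEuclideanLin_apply, OrthonormalBasis.coe_toBasis,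
      EuclideanSpace.basisFun_apply, EuclideanSpace.ofLp_single, ← Matrix.mulVec_mulVec,
      hmv, hmv', hmulvec, Matrix.mulVec_smul, Matrix.diagonal_mulVec_single,
      WithLp.toLp_smul, EuclideanSpace.toLp_single, mul_one]
    apply PiLp.ext
    intro p
    simp [EuclideanSpace.single_apply, Pi.single_apply]
  rw [key]
  exact Matrix.isDiag_diagonal _


/-- Hermitian blocks of a transfer matrix satisfying the conditions (BC-CC) pairwise
commute; consequently they are simultaneously unitarily diagonalizable. -/
theorem hermitian_transfer_blocks_reducible {n : ℕ}
    (C11 C12 C21 C22 : Matrix (Fin n) (Fin n) ℂ)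
    (h11 : C11ᴴ = C11) (h12 : C12ᴴ = C12) (h21 : C21ᴴ = C21) (h22 : C22ᴴ = C22)
    (hcc1 : C12 * C11 = C11 * C12) (hcc2 : C21 * C22 = C22 * C21)
    (hcc3 : C11 * C22 - C12 * C21 = 1) :
    (C11 * C12 = C12 * C11 ∧ C11 * C21 = C21 * C11 ∧ C11 * C22 = C22 * C11 ∧
     C12 * C21 = C21 * C12 ∧ C12 * C22 = C22 * C12 ∧ C21 * C22 = C22 * C21) ∧
    ∃ Θ : Matrix (Fin n) (Fin n) ℂ, Θ * Θᴴ = 1 ∧ Θᴴ * Θ = 1 ∧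
      (Θ⁻¹ * C11 * Θ).IsDiag ∧ (Θ⁻¹ * C12 * Θ).IsDiag ∧
      (Θ⁻¹ * C21 * Θ).IsDiag ∧ (Θ⁻¹ * C22 * Θ).IsDiag := by
  obtain ⟨hAC, hAD, hBC, hBD⟩ :=
    blocks_commute C11 C12 C21 C22 h11 h12 h21 h22 hcc1 hcc2 hcc3
  have hherm : ∀ i : Fin 4, (![C11, C12, C21, C22] i).IsHermitian := by
    intro i
    fin_cases i <;> simpa [Matrix.IsHermitian]
  have hcomm : ∀ i j : Fin 4,
      ![C11, C12, C21, C22] i * ![C11, C12, C21, C22] j =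
      ![C11, C12, C21, C22] j * ![C11, C12, C21, C22] i := by
    intro i j
    fin_cases i <;> fin_cases j <;>
      simp only [Matrix.cons_val', Matrix.cons_val_zero, Matrix.cons_val_one,
        Matrix.head_cons, Matrix.head_fin_const, Matrix.cons_val_fin_one,
        Matrix.cons_val_two, Matrix.cons_val_three, Matrix.tail_cons] <;>
      first
        | rfl
        | exact hcc1 | exact hcc1.symm | exact hcc2 | exact hcc2.symm
        | exact hAC | exact hAC.symm | exact hAD | exact hAD.symm
        | exact hBC | exact hBC.symm | exact hBD | exact hBD.symm
  obtain ⟨Θ, hΘ1, hΘ2, hdiag⟩ := simul_diag_of_commute ![C11, C12, C21, C22] hherm hcomm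
  have hinv : Θ⁻¹ = Θᴴ := Matrix.inv_eq_left_inv hΘ2
  refine ⟨⟨hcc1.symm, hAC, hAD, hBC, hBD, hcc2⟩, Θ, hΘ1, hΘ2, ?_, ?_, ?_, ?_⟩ <;>
    rw [hinv]
  · simpa using hdiag 0
  · simpa using hdiag 1
  · simpa using hdiag 2
  · simpa using hdiag 3
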